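/- For every nonzero real number a and every (x,y) ∈ ℝ², the map L̃ of Theorem 6.1 satisfies Im b(∂L̃/∂x, ∂L̃/∂y) = 0, i.e. ⟨i·∂L̃/∂x, ∂L̃/∂y⟩ = 0. Combined with horizontality, this expresses that the projected surface π∘L̃ in CP²₁(4) is Lagrangian. -/

import Mathlib

open Complex

/-- The index-one Hermitian form `b(z,w) = −conj z₁ · w₁ + conj z₂ · w₂ + conj z₃ · w₃`
on `ℂ³`, over which the pseudo-sphere `S⁵₂(1) = {z : b(z,z) = 1}` and the Hopf
fibration `π : S⁵₂(1) → CP²₁(4)` are defined. -/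
noncomputable def bSph (z w : ℂ × ℂ × ℂ) : ℂ :=
  -(starRingEnd ℂ z.1) * w.1 + (starRingEnd ℂ z.2.1) * w.2.1
    + (starRingEnd ℂ z.2.2) * w.2.2

/-- The horizontal lift `L̃ : ℝ² → ℂ³` of Theorem 6.1 (the timelike first
coordinate carries the `sinh` factor). -/
noncomputable def Lcp (a x y : ℝ) : ℂ × ℂ × ℂ :=
  ((1 / Real.sqrt 3 : ℝ) : ℂ) •
    (((Real.sqrt 2 : ℝ) : ℂ) * Complex.exp (Complex.I * ((x - a ^ 2 * y : ℝ) : ℂ) / (2 * (a : ℂ)))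
        * ((Real.sinh (Real.sqrt 3 * (x + a ^ 2 * y) / (2 * a)) : ℝ) : ℂ),
     Complex.exp (Complex.I * ((a ^ 2 * y - x : ℝ) : ℂ) / (a : ℂ)),
     ((Real.sqrt 2 : ℝ) : ℂ) * Complex.exp (Complex.I * ((x - a ^ 2 * y : ℝ) : ℂ) / (2 * (a : ℂ)))
        * ((Real.cosh (Real.sqrt 3 * (x + a ^ 2 * y) / (2 * a)) : ℝ) : ℂ))

set_option maxHeartbeats 1600000 in
/-- Theorem 6.1: `Im b(∂L̃/∂x, ∂L̃/∂y) = 0`, i.e. `⟨i·∂L̃/∂x, ∂L̃/∂y⟩ = 0`;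
combined with horizontality this expresses that `π ∘ L̃` is Lagrangian in
`CP²₁(4)`. -/
theorem Lcp_lagrangian (a : ℝ) (ha : a ≠ 0) :
    ∀ x y : ℝ,
      (bSph (deriv (fun t => Lcp a t y) x) (deriv (fun t => Lcp a x t) y)).im = 0 := by
  intro x y
  have ha2 : (2 : ℝ) * a ≠ 0 := by positivity
  -- rewrite the exponentials in terms of real cos/sin
  have hE1 : ∀ r : ℝ, Complex.exp (Complex.I * (r : ℂ) / (2 * (a : ℂ))) =
      ((Real.cos (r / (2 * a)) : ℝ) : ℂ) + ((Real.sin (r / (2 * a)) : ℝ) : ℂ) * I := by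
    intro r
    have h : Complex.I * (r : ℂ) / (2 * (a : ℂ)) = ((r / (2 * a) : ℝ) : ℂ) * I := by
      push_cast
      field_simp
    rw [h, Complex.exp_mul_I, ← Complex.ofReal_cos, ← Complex.ofReal_sin]
  have hE2 : ∀ r : ℝ, Complex.exp (Complex.I * (r : ℂ) / (a : ℂ)) =
      ((Real.cos (r / a) : ℝ) : ℂ) + ((Real.sin (r / a) : ℝ) : ℂ) * I := by
    intro r
    have h : Complex.I * (r : ℂ) / (a : ℂ) = ((r / a : ℝ) : ℂ) * I := by
      push_cast
      field_simp
    rw [h, Complex.exp_mul_I, ← Complex.ofReal_cos, ← Complex.ofReal_sin]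
  have hLfun : ∀ u v : ℝ, Lcp a u v =
      ((1 / Real.sqrt 3 : ℝ) : ℂ) •
        (((Real.sqrt 2 : ℝ) : ℂ) *
            (((Real.cos ((u - a ^ 2 * v) / (2 * a)) : ℝ) : ℂ)
              + ((Real.sin ((u - a ^ 2 * v) / (2 * a)) : ℝ) : ℂ) * I)
            * ((Real.sinh (Real.sqrt 3 * (u + a ^ 2 * v) / (2 * a)) : ℝ) : ℂ),
         ((Real.cos ((a ^ 2 * v - u) / a) : ℝ) : ℂ)
              + ((Real.sin ((a ^ 2 * v - u) / a) : ℝ) : ℂ) * I,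
         ((Real.sqrt 2 : ℝ) : ℂ) *
            (((Real.cos ((u - a ^ 2 * v) / (2 * a)) : ℝ) : ℂ)
              + ((Real.sin ((u - a ^ 2 * v) / (2 * a)) : ℝ) : ℂ) * I)
            * ((Real.cosh (Real.sqrt 3 * (u + a ^ 2 * v) / (2 * a)) : ℝ) : ℂ)) := by
    intro u v
    unfold Lcp
    rw [hE1, hE2]
  -- derivative in x
  have hθx : HasDerivAt (fun t : ℝ => (t - a ^ 2 * y) / (2 * a)) (1 / (2 * a)) x :=
    ((hasDerivAt_id x).sub_const _).div_const _
  have hσx : HasDerivAt (fun t : ℝ => Real.sqrt 3 * (t + a ^ 2 * y) / (2 * a))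
      (Real.sqrt 3 * 1 / (2 * a)) x :=
    (((hasDerivAt_id x).add_const _).const_mul _).div_const _
  have hφx : HasDerivAt (fun t : ℝ => (a ^ 2 * y - t) / a) (-1 / a) x :=
    ((hasDerivAt_id x).const_sub _).div_const _
  have h1x := ((((Real.hasDerivAt_cos _).comp x hθx).ofReal_comp.add
      (((Real.hasDerivAt_sin _).comp x hθx).ofReal_comp.mul_const I)).const_mul
        ((Real.sqrt 2 : ℝ) : ℂ)).mul
      (((Real.hasDerivAt_sinh _).comp x hσx).ofReal_comp)
  have h2x := ((Real.hasDerivAt_cos _).comp x hφx).ofReal_comp.add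
      (((Real.hasDerivAt_sin _).comp x hφx).ofReal_comp.mul_const I)
  have h3x := ((((Real.hasDerivAt_cos _).comp x hθx).ofReal_comp.add
      (((Real.hasDerivAt_sin _).comp x hθx).ofReal_comp.mul_const I)).const_mul
        ((Real.sqrt 2 : ℝ) : ℂ)).mul
      (((Real.hasDerivAt_cosh _).comp x hσx).ofReal_comp)
  have hx := ((h1x.prodMk (h2x.prodMk h3x)).const_smul (((1 / Real.sqrt 3 : ℝ) : ℂ))).deriv
  -- derivative in y
  have hθy : HasDerivAt (fun t : ℝ => (x - a ^ 2 * t) / (2 * a)) (-(a ^ 2 * 1) / (2 * a)) y := by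
    exact (((hasDerivAt_id y).const_mul (a ^ 2)).const_sub _).div_const _
  have hσy : HasDerivAt (fun t : ℝ => Real.sqrt 3 * (x + a ^ 2 * t) / (2 * a))
      (Real.sqrt 3 * (a ^ 2 * 1) / (2 * a)) y :=
    ((((hasDerivAt_id y).const_mul (a ^ 2)).const_add _).const_mul _).div_const _
  have hφy : HasDerivAt (fun t : ℝ => (a ^ 2 * t - x) / a) (a ^ 2 * 1 / a) y :=
    (((hasDerivAt_id y).const_mul (a ^ 2)).sub_const _).div_const _
  have h1y := ((((Real.hasDerivAt_cos _).comp y hθy).ofReal_comp.add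
      (((Real.hasDerivAt_sin _).comp y hθy).ofReal_comp.mul_const I)).const_mul
        ((Real.sqrt 2 : ℝ) : ℂ)).mul
      (((Real.hasDerivAt_sinh _).comp y hσy).ofReal_comp)
  have h2y := ((Real.hasDerivAt_cos _).comp y hφy).ofReal_comp.add
      (((Real.hasDerivAt_sin _).comp y hφy).ofReal_comp.mul_const I)
  have h3y := ((((Real.hasDerivAt_cos _).comp y hθy).ofReal_comp.add
      (((Real.hasDerivAt_sin _).comp y hθy).ofReal_comp.mul_const I)).const_mul
        ((Real.sqrt 2 : ℝ) : ℂ)).mul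
      (((Real.hasDerivAt_cosh _).comp y hσy).ofReal_comp)
  have hy := ((h1y.prodMk (h2y.prodMk h3y)).const_smul (((1 / Real.sqrt 3 : ℝ) : ℂ))).deriv
  simp only [Function.comp_def, Pi.smul_def, Pi.add_apply, Pi.mul_apply] at hx hy
  simp only [hLfun]
  rw [hx, hy]
  simp only [bSph, Prod.smul_fst, Prod.smul_snd, smul_eq_mul, map_add, map_mul, map_neg,
    Complex.conj_ofReal, Complex.conj_I, Function.comp_def]
  simp only [Complex.add_im, Complex.add_re, Complex.mul_im, Complex.mul_re,
    Complex.neg_im, Complex.neg_re, Complex.I_re, Complex.I_im,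
    Complex.ofReal_re, Complex.ofReal_im]
  field_simp
  ring
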